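/- For finite alphabets, any joint distribution P on (X^n, Y^n) and any test distribution T on Y^n, the directed information is upper bounded as I(X^n → Y^n) ≤ E_{X^n‖Y^{n−1}}[D(P_{Y^n‖X^n} ‖ T_{Y^n})], i.e., I(X^n → Y^n) ≤ Σ_{x^n,y^n} P(x^n‖y^{n−1}) P(y^n‖x^n) log₂(P(y^n‖x^n)/T(y^n)). -/
import Mathlib


open scoped Classical

namespace Stmt1

variable {X Y : Type}

/-- `marg n P a b x y` is the marginal probability `P(x^a, y^b)`. -/
noncomputable def marg (n : ℕ) [Fintype X] [Fintype Y]
    (P : (Fin n → X) × (Fin n → Y) → ℝ) (a b : ℕ)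
    (x : Fin n → X) (y : Fin n → Y) : ℝ :=
  ∑ x' : Fin n → X, ∑ y' : Fin n → Y,
    if (∀ j : Fin n, (j : ℕ) < a → x' j = x j) ∧ (∀ j : Fin n, (j : ℕ) < b → y' j = y j)
      then P (x', y') else 0

/-- Directed information `I(X^n → Y^n) = ∑_{i=1}^n I(X^i; Y_i | Y^{i-1})`. -/
noncomputable def directedInfo (n : ℕ) [Fintype X] [Fintype Y]
    (P : (Fin n → X) × (Fin n → Y) → ℝ) : ℝ :=
  ∑ i ∈ Finset.range n, ∑ x : Fin n → X, ∑ y : Fin n → Y,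
    P (x, y) * Real.logb 2
      ((marg n P (i + 1) (i + 1) x y * marg n P 0 i x y) /
        (marg n P (i + 1) i x y * marg n P 0 (i + 1) x y))

/-- Causal conditioning `P(y^n ‖ x^n) = ∏_{i=1}^n P(y_i | y^{i-1}, x^i)`. -/
noncomputable def causalY (n : ℕ) [Fintype X] [Fintype Y]
    (P : (Fin n → X) × (Fin n → Y) → ℝ) (x : Fin n → X) (y : Fin n → Y) : ℝ :=
  ∏ i ∈ Finset.range n, marg n P (i + 1) (i + 1) x y / marg n P (i + 1) i x y

/-- Causal conditioning of the inputs `P(x^n ‖ y^{n-1}) = ∏_{i=1}^n P(x_i | x^{i-1}, y^{i-1})`. -/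
noncomputable def causalX (n : ℕ) [Fintype X] [Fintype Y]
    (P : (Fin n → X) × (Fin n → Y) → ℝ) (x : Fin n → X) (y : Fin n → Y) : ℝ :=
  ∏ i ∈ Finset.range n, marg n P (i + 1) i x y / marg n P i i x y

section aux
variable (n : ℕ) [Fintype X] [Fintype Y] (P : (Fin n → X) × (Fin n → Y) → ℝ)

lemma marg_nonneg (hP0 : ∀ p, 0 ≤ P p) (a b : ℕ) (x : Fin n → X) (y : Fin n → Y) :
    0 ≤ marg n P a b x y := by
  refine Finset.sum_nonneg fun x' _ => Finset.sum_nonneg fun y' _ => ?_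
  split
  · exact hP0 _
  · rfl

lemma marg_mono (hP0 : ∀ p, 0 ≤ P p) {a a' b b' : ℕ} (ha : a ≤ a') (hb : b ≤ b')
    (x : Fin n → X) (y : Fin n → Y) :
    marg n P a' b' x y ≤ marg n P a b x y := by
  refine Finset.sum_le_sum fun x' _ => Finset.sum_le_sum fun y' _ => ?_
  split_ifs with h1 h2
  · exact le_refl _
  · exact absurd ⟨fun j hj => h1.1 j (hj.trans_le ha), fun j hj => h1.2 j (hj.trans_le hb)⟩ h2
  · exact hP0 _
  · rfl

lemma le_marg (hP0 : ∀ p, 0 ≤ P p) (a b : ℕ) (x : Fin n → X) (y : Fin n → Y) :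
    P (x, y) ≤ marg n P a b x y := by
  unfold marg
  have step1 : P (x, y) ≤ ∑ y' : Fin n → Y, (if (∀ j : Fin n, (j : ℕ) < a → x j = x j) ∧
      (∀ j : Fin n, (j : ℕ) < b → y' j = y j) then P (x, y') else 0) := by
    refine le_trans (by simp) (Finset.single_le_sum
      (f := fun y' => if (∀ j : Fin n, (j : ℕ) < a → x j = x j) ∧
        (∀ j : Fin n, (j : ℕ) < b → y' j = y j) then P (x, y') else 0)
      (fun y' _ => ?_) (Finset.mem_univ y))
    beta_reduce
    split
    · exact hP0 _
    · rfl
  refine step1.trans (Finset.single_le_sum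
    (f := fun x' => ∑ y' : Fin n → Y, if (∀ j : Fin n, (j : ℕ) < a → x' j = x j) ∧
      (∀ j : Fin n, (j : ℕ) < b → y' j = y j) then P (x', y') else 0)
    (fun x' _ => Finset.sum_nonneg fun y' _ => ?_) (Finset.mem_univ x))
  beta_reduce
  split
  · exact hP0 _
  · rfl

lemma marg_nn (x : Fin n → X) (y : Fin n → Y) : marg n P n n x y = P (x, y) := by
  unfold marg
  have key : ∀ (x' : Fin n → X) (y' : Fin n → Y),
      ((∀ j : Fin n, (j : ℕ) < n → x' j = x j) ∧ (∀ j : Fin n, (j : ℕ) < n → y' j = y j)) ↔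
        (x' = x ∧ y' = y) := by
    intro x' y'
    constructor
    · rintro ⟨h1, h2⟩
      exact ⟨funext fun j => h1 j j.isLt, funext fun j => h2 j j.isLt⟩
    · rintro ⟨rfl, rfl⟩
      exact ⟨fun _ _ => rfl, fun _ _ => rfl⟩
  simp only [key]
  rw [Finset.sum_eq_single x]
  · rw [Finset.sum_eq_single y]
    · simp
    · intro b _ hb; simp [hb]
    · simp
  · intro b _ hb
    refine Finset.sum_eq_zero fun y' _ => ?_
    simp [hb]
  · simp

lemma marg_zero_zero (hP1 : ∑ p : (Fin n → X) × (Fin n → Y), P p = 1)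
    (x : Fin n → X) (y : Fin n → Y) : marg n P 0 0 x y = 1 := by
  unfold marg
  simp only [Nat.not_lt_zero, false_implies, implies_true, and_self, if_true]
  rw [← Fintype.sum_prod_type] at *
  exact hP1

lemma marg_zero_n (x : Fin n → X) (y : Fin n → Y) :
    marg n P 0 n x y = ∑ x' : Fin n → X, P (x', y) := by
  unfold marg
  simp only [Nat.not_lt_zero, false_implies, implies_true, true_and]
  refine Finset.sum_congr rfl fun x' _ => ?_
  have key : ∀ y' : Fin n → Y, (∀ j : Fin n, (j : ℕ) < n → y' j = y j) ↔ y' = y := by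
    intro y'
    constructor
    · intro h; exact funext fun j => h j j.isLt
    · rintro rfl; exact fun _ _ => rfl
  simp only [key]
  simp

lemma telescope (g : ℕ → ℝ) (hnn : ∀ k, 0 ≤ g k) (hm : ∀ k, g (k + 1) ≤ g k)
    (h1 : g 0 = 1) (m : ℕ) :
    ∏ k ∈ Finset.range m, g (k + 1) / g k = g m := by
  induction m with
  | zero => simpa using h1.symm
  | succ m ih =>
    rw [Finset.prod_range_succ, ih]
    by_cases h : g m = 0
    · have h2 : g (m + 1) = 0 := le_antisymm (h ▸ hm m) (hnn _)
      simp [h, h2]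
    · rw [mul_comm, div_mul_cancel₀ _ h]

lemma prod_range_pair (f : ℕ → ℝ) (m : ℕ) :
    ∏ i ∈ Finset.range m, (f (2 * i) * f (2 * i + 1)) = ∏ k ∈ Finset.range (2 * m), f k := by
  induction m with
  | zero => simp
  | succ m ih =>
    rw [Finset.prod_range_succ, ih, show 2 * (m + 1) = 2 * m + 1 + 1 by ring,
      Finset.prod_range_succ, Finset.prod_range_succ]
    ring

lemma causal_mul (hP0 : ∀ p, 0 ≤ P p) (hP1 : ∑ p : (Fin n → X) × (Fin n → Y), P p = 1)
    (x : Fin n → X) (y : Fin n → Y) :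
    causalX n P x y * causalY n P x y = P (x, y) := by
  unfold causalX causalY
  rw [← Finset.prod_mul_distrib]
  set g : ℕ → ℝ := fun k => marg n P ((k + 1) / 2) (k / 2) x y with hg
  have hstep : ∀ i ∈ Finset.range n,
      marg n P (i + 1) i x y / marg n P i i x y *
        (marg n P (i + 1) (i + 1) x y / marg n P (i + 1) i x y) =
      (fun k => g (k + 1) / g k) (2 * i) * (fun k => g (k + 1) / g k) (2 * i + 1) := by
    intro i _
    simp only [hg]
    rw [show (2 * i + 1) / 2 = i by omega, show (2 * i) / 2 = i by omega,
      show (2 * i + 1 + 1) / 2 = i + 1 by omega, show (2 * i + 1 + 1 + 1) / 2 = i + 1 by omega]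
  rw [Finset.prod_congr rfl hstep, prod_range_pair (fun k => g (k + 1) / g k) n]
  have := telescope g (fun k => marg_nonneg n P hP0 _ _ x y)
    (fun k => marg_mono n P hP0 (by omega) (by omega) x y)
    (by simpa [hg] using marg_zero_zero n P hP1 x y) (2 * n)
  rw [this, hg]
  simpa [show (2 * n + 1) / 2 = n by omega, show (2 * n) / 2 = n by omega]
    using marg_nn n P x y

lemma prod_Q (hP0 : ∀ p, 0 ≤ P p) (hP1 : ∑ p : (Fin n → X) × (Fin n → Y), P p = 1)
    (x : Fin n → X) (y : Fin n → Y) :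
    ∏ i ∈ Finset.range n, marg n P 0 (i + 1) x y / marg n P 0 i x y =
      ∑ x' : Fin n → X, P (x', y) := by
  rw [← marg_zero_n n P x y]
  exact telescope (fun k => marg n P 0 k x y) (fun k => marg_nonneg n P hP0 _ _ x y)
    (fun k => marg_mono n P hP0 le_rfl (by omega) x y) (marg_zero_zero n P hP1 x y) n

lemma sum_logb_eq (hP0 : ∀ p, 0 ≤ P p)
    (hP1 : ∑ p : (Fin n → X) × (Fin n → Y), P p = 1) (x : Fin n → X) (y : Fin n → Y) (hp : 0 < P (x, y)) :
    ∑ i ∈ Finset.range n, Real.logb 2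
      ((marg n P (i + 1) (i + 1) x y * marg n P 0 i x y) /
        (marg n P (i + 1) i x y * marg n P 0 (i + 1) x y)) =
    Real.logb 2 (causalY n P x y) - Real.logb 2 (marg n P 0 n x y) := by
  have mpos : ∀ a b, 0 < marg n P a b x y := fun a b => hp.trans_le (le_marg n P hP0 a b x y)
  have h1 : ∀ i ∈ Finset.range n, Real.logb 2
      ((marg n P (i + 1) (i + 1) x y * marg n P 0 i x y) /
        (marg n P (i + 1) i x y * marg n P 0 (i + 1) x y)) =
      Real.logb 2 (marg n P (i + 1) (i + 1) x y / marg n P (i + 1) i x y) -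
        (Real.logb 2 (marg n P 0 (i + 1) x y) - Real.logb 2 (marg n P 0 i x y)) := by
    intro i _
    rw [Real.logb_div (mul_pos (mpos _ _) (mpos _ _)).ne' (mul_pos (mpos _ _) (mpos _ _)).ne',
      Real.logb_mul (mpos _ _).ne' (mpos _ _).ne', Real.logb_mul (mpos _ _).ne' (mpos _ _).ne',
      Real.logb_div (mpos _ _).ne' (mpos _ _).ne']
    ring
  rw [Finset.sum_congr rfl h1, Finset.sum_sub_distrib,
    Finset.sum_range_sub (fun i => Real.logb 2 (marg n P 0 i x y))]
  have h2 : ∑ i ∈ Finset.range n,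
      Real.logb 2 (marg n P (i + 1) (i + 1) x y / marg n P (i + 1) i x y) =
      Real.logb 2 (causalY n P x y) := by
    unfold causalY
    rw [Real.logb_prod _ _ (fun i _ => (div_pos (mpos _ _) (mpos _ _)).ne')]
  rw [h2]
  congr 1
  rw [marg_zero_zero n P hP1 x y, Real.logb_one, sub_zero]

end aux

/-- For any joint pmf `P` on `(X^n, Y^n)` (factorizing as
`P(x^n, y^n) = P(x^n‖y^{n-1})·P(y^n‖x^n)`) and any test pmf `T` on `Y^n`,
`I(X^n → Y^n) ≤ Σ_{x^n,y^n} P(x^n‖y^{n-1}) P(y^n‖x^n) log₂(P(y^n‖x^n)/T(y^n))`. -/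
theorem directedInfo_le_expected_divergence (n : ℕ) [Fintype X] [Fintype Y]
    (P : (Fin n → X) × (Fin n → Y) → ℝ) (T : (Fin n → Y) → ℝ)
    (hP0 : ∀ p, 0 ≤ P p) (hP1 : ∑ p : (Fin n → X) × (Fin n → Y), P p = 1)
    (hT0 : ∀ y, 0 ≤ T y) (hT1 : ∑ y : Fin n → Y, T y = 1)
    (hsupp : ∀ y : Fin n → Y, (∑ x : Fin n → X, P (x, y)) ≠ 0 → T y ≠ 0) :
    directedInfo n P ≤
      ∑ x : Fin n → X, ∑ y : Fin n → Y,
        causalX n P x y * causalY n P x y *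
          Real.logb 2 (causalY n P x y / T y) := by
  set Q : (Fin n → Y) → ℝ := fun y => ∑ x' : Fin n → X, P (x', y) with hQdef
  have hQ0 : ∀ y, 0 ≤ Q y := fun y => Finset.sum_nonneg fun x' _ => hP0 _
  have hQ1 : ∑ y : Fin n → Y, Q y = 1 := by
    rw [← hP1, Fintype.sum_prod_type]
    exact Finset.sum_comm
  have hPQ : ∀ (x : Fin n → X) (y : Fin n → Y), P (x, y) ≤ Q y := fun x y =>
    Finset.single_le_sum (f := fun x' => P (x', y)) (fun x' _ => hP0 _) (Finset.mem_univ x)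
  -- rewrite directedInfo as a double sum over (x, y)
  have hDI : directedInfo n P = ∑ x : Fin n → X, ∑ y : Fin n → Y,
      P (x, y) * ∑ i ∈ Finset.range n, Real.logb 2
        ((marg n P (i + 1) (i + 1) x y * marg n P 0 i x y) /
          (marg n P (i + 1) i x y * marg n P 0 (i + 1) x y)) := by
    unfold directedInfo
    rw [Finset.sum_comm]
    refine Finset.sum_congr rfl fun x _ => ?_
    rw [Finset.sum_comm]
    exact Finset.sum_congr rfl fun y _ => (Finset.mul_sum _ _ _).symm
  -- key pointwise identity for the difference
  have key : ∀ (x : Fin n → X) (y : Fin n → Y),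
      causalX n P x y * causalY n P x y * Real.logb 2 (causalY n P x y / T y) -
        P (x, y) * ∑ i ∈ Finset.range n, Real.logb 2
          ((marg n P (i + 1) (i + 1) x y * marg n P 0 i x y) /
            (marg n P (i + 1) i x y * marg n P 0 (i + 1) x y)) =
      P (x, y) * (Real.logb 2 (Q y) - Real.logb 2 (T y)) := by
    intro x y
    rw [causal_mul n P hP0 hP1 x y]
    rcases eq_or_lt_of_le (hP0 (x, y)) with h | h
    · rw [← h]; ring
    · have hQpos : 0 < Q y := lt_of_lt_of_le h (hPQ x y)
      have hT : T y ≠ 0 := hsupp y hQpos.ne'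
      have hcY : 0 < causalY n P x y := by
        have mpos : ∀ a b, 0 < marg n P a b x y := fun a b =>
          h.trans_le (le_marg n P hP0 a b x y)
        exact Finset.prod_pos fun i _ => div_pos (mpos _ _) (mpos _ _)
      rw [sum_logb_eq n P hP0 hP1 x y h, Real.logb_div hcY.ne' hT, marg_zero_n n P x y]
      ring
  -- Gibbs' inequality
  have hlog2 : (0 : ℝ) < Real.log 2 := Real.log_pos (by norm_num)
  have gibbs : 0 ≤ ∑ y : Fin n → Y, Q y * (Real.logb 2 (Q y) - Real.logb 2 (T y)) := by
    have hterm : ∀ y : Fin n → Y, Q y - T y ≤ Q y * (Real.log (Q y) - Real.log (T y)) := by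
      intro y
      rcases eq_or_lt_of_le (hQ0 y) with h | h
      · rw [← h]
        simpa using hT0 y
      · have hT : 0 < T y := (hT0 y).lt_of_ne' (hsupp y h.ne')
        have h1 : Real.log (T y / Q y) ≤ T y / Q y - 1 :=
          Real.log_le_sub_one_of_pos (div_pos hT h)
        rw [Real.log_div hT.ne' h.ne'] at h1
        have h2 : 1 - T y / Q y ≤ Real.log (Q y) - Real.log (T y) := by linarith
        have h3 := mul_le_mul_of_nonneg_left h2 h.le
        calc Q y - T y = Q y * (1 - T y / Q y) := by field_simp
          _ ≤ Q y * (Real.log (Q y) - Real.log (T y)) := h3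
    have hsum : (0 : ℝ) ≤ ∑ y : Fin n → Y, Q y * (Real.log (Q y) - Real.log (T y)) := by
      calc (0 : ℝ) = ∑ y : Fin n → Y, (Q y - T y) := by
            rw [Finset.sum_sub_distrib, hQ1, hT1]; ring
        _ ≤ _ := Finset.sum_le_sum fun y _ => hterm y
    have heq : ∑ y : Fin n → Y, Q y * (Real.logb 2 (Q y) - Real.logb 2 (T y)) =
        (∑ y : Fin n → Y, Q y * (Real.log (Q y) - Real.log (T y))) / Real.log 2 := by
      rw [Finset.sum_div]
      refine Finset.sum_congr rfl fun y _ => ?_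
      simp only [Real.logb]
      field_simp
    rw [heq]
    positivity
  -- combine
  have hdiff : (∑ x : Fin n → X, ∑ y : Fin n → Y,
      causalX n P x y * causalY n P x y * Real.logb 2 (causalY n P x y / T y)) -
      directedInfo n P =
      ∑ y : Fin n → Y, Q y * (Real.logb 2 (Q y) - Real.logb 2 (T y)) := by
    rw [hDI, ← Finset.sum_sub_distrib]
    simp_rw [← Finset.sum_sub_distrib, key]
    rw [Finset.sum_comm]
    refine Finset.sum_congr rfl fun y _ => ?_
    rw [← Finset.sum_mul]
  linarith [hdiff ▸ gibbs]


end Stmt1
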